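/- Let (X,d) be a ν-generalized metric space and T : X → X a Ćirić–Matkowski contraction (d(Tx,Ty) < d(x,y) for x ≠ y, and for every ε > 0 there is δ > 0 with d(x,y) < δ + ε implying d(Tx,Ty) ≤ ε). If x ∈ X is such that the iterates T^n x are pairwise distinct, then d(T^n x, T^{n+1} x) → 0 and d(T^n x, T^{n+2} x) → 0 as n → ∞. -/
import Mathlib


open Filter Topology

/-- `(X,d)` is a ν-generalized metric space. -/
def NuGenMetric (ν : ℕ) {X : Type*} (d : X → X → ℝ) : Prop :=
  (∀ x y, 0 ≤ d x y) ∧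
  (∀ x y, d x y = 0 ↔ x = y) ∧
  (∀ x y, d x y = d y x) ∧
  (∀ u : Fin (ν + 2) → X, Function.Injective u →
    d (u 0) (u (Fin.last (ν + 1))) ≤ ∑ i : Fin (ν + 1), d (u i.castSucc) (u i.succ))

/-- `{x n}` is `k`-Cauchy: `lim_n sup_m d(x_n, x_{n+1+mk}) = 0` (sup taken in `[0,∞]`). -/
def IsKCauchy {X : Type*} (d : X → X → ℝ) (x : ℕ → X) (k : ℕ) : Prop :=
  Filter.Tendsto (fun n => ⨆ m : ℕ, ENNReal.ofReal (d (x n) (x (n + 1 + m * k))))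
    Filter.atTop (nhds 0)

lemma aux_tendsto (s : ℕ → ℝ) (hpos : ∀ n, 0 ≤ s n) (hdec : ∀ n, s (n + 1) < s n)
    (hcm : ∀ ε > (0 : ℝ), ∃ δ > (0 : ℝ), ∀ n, s n < δ + ε → s (n + 1) ≤ ε) :
    Filter.Tendsto s Filter.atTop (nhds 0) := by
  have hbdd : BddBelow (Set.range s) := ⟨0, by rintro _ ⟨n, rfl⟩; exact hpos n⟩
  have hanti : Antitone s := antitone_nat_of_succ_le fun n => (hdec n).le
  have htend := tendsto_atTop_ciInf hanti hbdd
  set c := ⨅ n, s n with hc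
  have hc0 : 0 ≤ c := le_ciInf hpos
  rcases hc0.lt_or_eq with hlt | heq
  · exfalso
    obtain ⟨δ, hδ, h⟩ := hcm c hlt
    obtain ⟨N, hN⟩ := exists_lt_of_ciInf_lt (show c < c + δ by linarith)
    have h1 : s (N + 1) ≤ c := h N (by linarith)
    have h2 : c ≤ s (N + 2) := ciInf_le hbdd (N + 2)
    have := hdec (N + 1)
    linarith
  · rwa [← heq] at htend

theorem stmt_8 {X : Type*} (ν : ℕ) (hν : 0 < ν) (d : X → X → ℝ)
    (hX : NuGenMetric ν d) (T : X → X)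
    (hc : ∀ x y : X, x ≠ y → d (T x) (T y) < d x y)
    (hcm : ∀ ε > (0 : ℝ), ∃ δ > (0 : ℝ), ∀ x y : X,
      d x y < δ + ε → d (T x) (T y) ≤ ε)
    (x : X) (hinj : Function.Injective (fun n : ℕ => T^[n] x)) :
    Filter.Tendsto (fun n => d (T^[n] x) (T^[n + 1] x)) Filter.atTop (nhds 0) ∧
    Filter.Tendsto (fun n => d (T^[n] x) (T^[n + 2] x)) Filter.atTop (nhds 0) := by
  obtain ⟨hnonneg, heq, hsymm, _⟩ := hX
  have hne : ∀ n k : ℕ, 0 < k → T^[n] x ≠ T^[n + k] x := by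
    intro n k hk h
    have := hinj h
    omega
  have key : ∀ k : ℕ, 0 < k →
      Filter.Tendsto (fun n => d (T^[n] x) (T^[n + k] x)) Filter.atTop (nhds 0) := by
    intro k hk
    apply aux_tendsto
    · intro n; exact hnonneg _ _
    · intro n
      have h1 : T^[n + 1] x = T (T^[n] x) := Function.iterate_succ_apply' T n x
      have h2 : T^[n + k + 1] x = T (T^[n + k] x) := Function.iterate_succ_apply' T (n + k) x
      have h3 : n + 1 + k = n + k + 1 := by omega
      rw [h3, h1, h2]
      exact hc _ _ (hne n k hk)
    · intro ε hε
      obtain ⟨δ, hδ, h⟩ := hcm ε hε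
      refine ⟨δ, hδ, fun n hn => ?_⟩
      have h1 : T^[n + 1] x = T (T^[n] x) := Function.iterate_succ_apply' T n x
      have h2 : T^[n + k + 1] x = T (T^[n + k] x) := Function.iterate_succ_apply' T (n + k) x
      have h3 : n + 1 + k = n + k + 1 := by omega
      rw [h3, h1, h2]
      exact h _ _ hn
  exact ⟨key 1 one_pos, key 2 two_pos⟩
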